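/- Let d, k ≥ 1, let W, W' : Fin k → ℝ^d and b, b' : Fin k → ℝ with W' j = W j and b' j = b j for all j ≠ g, and let h, h' be the clipped maxout outputs computed from (W, b) and (W', b') respectively. If x ∈ ℝ^d satisfies h'(x) ≠ h(x), then ⟪x, W j⟫ + b j < 0 for every j ≠ g; that is, the interfered examples lie in the set {x | ∀ j ≠ g, ⟪x, W j⟫ + b j < 0}. -/
import Mathlib


open RealInnerProductSpace

/-- Clipped maxout unit: `h(x) = max_j min(⟪x, W j⟫ + b j, 0)`. -/
noncomputable def clippedMaxout {d k : ℕ} (hk : 1 ≤ k)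
    (W : Fin k → EuclideanSpace ℝ (Fin d)) (b : Fin k → ℝ)
    (x : EuclideanSpace ℝ (Fin d)) : ℝ :=
  Finset.univ.sup' (Finset.univ_nonempty_iff.mpr ⟨⟨0, hk⟩⟩)
    fun j => min (⟪x, W j⟫ + b j) 0

theorem interfered_examples_in_convex_region
    {d k : ℕ} (hd : 1 ≤ d) (hk : 1 ≤ k)
    (W W' : Fin k → EuclideanSpace ℝ (Fin d)) (b b' : Fin k → ℝ) (g : Fin k)
    (hW : ∀ j, j ≠ g → W' j = W j) (hb : ∀ j, j ≠ g → b' j = b j)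
    (x : EuclideanSpace ℝ (Fin d))
    (hx : clippedMaxout hk W' b' x ≠ clippedMaxout hk W b x) :
    ∀ j, j ≠ g → ⟪x, W j⟫ + b j < 0 := by
  by_contra hcon
  push_neg at hcon
  obtain ⟨j, hjg, hj⟩ := hcon
  have key : ∀ (V : Fin k → EuclideanSpace ℝ (Fin d)) (c : Fin k → ℝ),
      0 ≤ ⟪x, V j⟫ + c j → clippedMaxout hk V c x = 0 := by
    intro V c h
    apply le_antisymm
    · exact Finset.sup'_le _ _ fun i _ => min_le_right _ _
    · have hmin : min (⟪x, V j⟫ + c j) 0 = 0 := min_eq_right h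
      calc (0:ℝ) = min (⟪x, V j⟫ + c j) 0 := hmin.symm
        _ ≤ _ := Finset.le_sup' (fun i => min (⟪x, V i⟫ + c i) 0) (Finset.mem_univ j)
  have h1 : clippedMaxout hk W b x = 0 := key W b hj
  have h2 : clippedMaxout hk W' b' x = 0 := by
    apply key
    rw [hW j hjg, hb j hjg]; exact hj
  exact hx (h2.trans h1.symm)
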